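/- Let α, β, γ, ζ be real constants with ζ ≠ 0, α ≠ 0, and β² - 4αγ > 0. Then the function e(x) = (√(β²-4αγ)/(2α)) · (1 + exp(x√(β²-4αγ)/ζ)·K)/(1 - exp(x√(β²-4αγ)/ζ)·K) - β/(2α), where K = (2αe₀ + β - √(β²-4αγ))/(2αe₀ + β + √(β²-4αγ)), satisfies the Riccati differential equation ζ·e'(x) = α·e(x)² + β·e(x) + γ on any interval around 0 where the denominator does not vanish, together with the initial condition e(0) = e₀ (assuming 2αe₀ + β + √(β²-4αγ) ≠ 0). -/

import Mathlib

open Real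

theorem riccati_exact_solution
    (α β γ ζ e₀ : ℝ) (hζ : ζ ≠ 0) (hα : α ≠ 0)
    (hD : β ^ 2 - 4 * α * γ > 0)
    (hden0 : 2 * α * e₀ + β + Real.sqrt (β ^ 2 - 4 * α * γ) ≠ 0)
    (K : ℝ)
    (hK : K = (2 * α * e₀ + β - Real.sqrt (β ^ 2 - 4 * α * γ)) /
              (2 * α * e₀ + β + Real.sqrt (β ^ 2 - 4 * α * γ)))
    (e : ℝ → ℝ)
    (he : ∀ x : ℝ, e x =
      (Real.sqrt (β ^ 2 - 4 * α * γ) / (2 * α)) *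
        (1 + Real.exp (x * Real.sqrt (β ^ 2 - 4 * α * γ) / ζ) * K) /
        (1 - Real.exp (x * Real.sqrt (β ^ 2 - 4 * α * γ) / ζ) * K) -
      β / (2 * α))
    (I : Set ℝ) (hI : Set.OrdConnected I) (hI0 : (0 : ℝ) ∈ I) (hIopen : IsOpen I)
    (hdenom : ∀ x ∈ I, 1 - Real.exp (x * Real.sqrt (β ^ 2 - 4 * α * γ) / ζ) * K ≠ 0) :
    e 0 = e₀ ∧
    ∀ x ∈ I, HasDerivAt e ((α * (e x) ^ 2 + β * (e x) + γ) / ζ) x := by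
  set s := Real.sqrt (β ^ 2 - 4 * α * γ) with hs
  have hs2 : s ^ 2 = β ^ 2 - 4 * α * γ := Real.sq_sqrt hD.le
  have hspos : 0 < s := Real.sqrt_pos.mpr hD
  have hγ : γ = (β ^ 2 - s ^ 2) / (4 * α) := by
    field_simp
    linarith [hs2]
  constructor
  · have h0 := hdenom 0 hI0
    simp only [zero_mul, zero_div, Real.exp_zero, one_mul] at h0
    rw [he 0]
    simp only [zero_mul, zero_div, Real.exp_zero, one_mul]
    rw [hK] at h0 ⊢
    field_simp at h0 ⊢
    have h2s : 2 * α * e₀ + β + s - (2 * α * e₀ + β - s) = 2 * s := by ring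
    rw [h2s] at h0 ⊢
    field_simp
    ring
  · intro x hx
    have hd := hdenom x hx
    have hexp : HasDerivAt (fun x : ℝ => Real.exp (x * s / ζ))
        (Real.exp (x * s / ζ) * (s / ζ)) x := by
      have h1 : HasDerivAt (fun x : ℝ => x * s / ζ) (s / ζ) x := by
        simpa using ((hasDerivAt_id x).mul_const s).div_const ζ
      exact h1.exp
    have hN : HasDerivAt (fun x : ℝ => (s / (2 * α)) * (1 + Real.exp (x * s / ζ) * K))
        ((s / (2 * α)) * (Real.exp (x * s / ζ) * (s / ζ) * K)) x :=
      ((hexp.mul_const K).const_add 1).const_mul _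
    have hDen : HasDerivAt (fun x : ℝ => 1 - Real.exp (x * s / ζ) * K)
        (-(Real.exp (x * s / ζ) * (s / ζ) * K)) x :=
      (hexp.mul_const K).const_sub 1
    have key := (hN.div hDen hd).sub_const (β / (2 * α))
    have hefun : e = fun x => (s / (2 * α)) * (1 + Real.exp (x * s / ζ) * K) /
        (1 - Real.exp (x * s / ζ) * K) - β / (2 * α) := funext he
    rw [he x, hefun]
    refine key.congr_deriv ?_
    rw [hγ]
    generalize Real.exp (x * s / ζ) = E at hd ⊢
    field_simp
    ring
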